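/- Every finite group H admits an injective group homomorphism i : H → M whose image is a universal subgroup of M. Moreover, if j : H → M is another injective homomorphism with universal image, then there exists an invertible element u ∈ M (i.e. a bijection ω → ω) with j(h) = u ∘ i(h) ∘ u^{-1} for all h ∈ H. -/

import Mathlib

noncomputable section

/- ## Basic setup: the monoid `M = Inj(ω,ω)`, supports, tameness, universal subgroups -/

open CategoryTheory Opposite Simplicial MonoidalCategory

set_option linter.unusedVariables false

/-- The monoid `𝕄 = Inj(ω,ω)` of injective self-maps of `ω = ℕ`, under composition. -/
noncomputable def Mi : Type := {f : ℕ → ℕ // Function.Injective f}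

noncomputable instance : Monoid Mi where
  one := ⟨id, fun _ _ h => h⟩
  mul u v := ⟨u.1 ∘ v.1, u.2.comp v.2⟩
  mul_assoc u v w := rfl
  one_mul u := rfl
  mul_one u := rfl

@[simp] lemma Mi.one_apply (n : ℕ) : (1 : Mi).1 n = n := rfl
@[simp] lemma Mi.mul_apply (u v : Mi) (n : ℕ) : (u * v).1 n = u.1 (v.1 n) := rfl

/-- An element `x` of an `𝕄`-"set" (given by a raw action `act`) is supported on `A ⊆ ω` if
every `u ∈ 𝕄` fixing `A` pointwise fixes `x`. -/
noncomputable def MSuppOn {X : Type*} (act : Mi → X → X) (A : Set ℕ) (x : X) : Prop :=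
  ∀ u : Mi, (∀ a ∈ A, u.1 a = a) → act u x = x

/-- Finitely supported elements. -/
noncomputable def MFinSupp {X : Type*} (act : Mi → X → X) (x : X) : Prop :=
  ∃ A : Set ℕ, A.Finite ∧ MSuppOn act A x

/-- The support of an element: the intersection of all finite sets on which it is supported. -/
noncomputable def MSupp {X : Type*} (act : Mi → X → X) (x : X) : Set ℕ :=
  ⋂₀ ({A | A.Finite ∧ MSuppOn act A x} : Set (Set ℕ))

/-- A (raw) `𝕄`-action is tame if every element is finitely supported. -/
noncomputable def MTame {X : Type*} (act : Mi → X → X) : Prop := ∀ x : X, MFinSupp act x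

/-- A submonoid `H ⊆ 𝕄` is a *universal subgroup* if it is a finite subgroup and `ω`, with the
tautological `H`-action, is a complete `H`-set universe, i.e. every finite `H`-set embeds
`H`-equivariantly into `ω`. -/
noncomputable def IsUniversal (H : Submonoid Mi) : Prop :=
  (∀ h ∈ H, ∃ h' ∈ H, h * h' = 1 ∧ h' * h = 1) ∧ Finite H ∧
    ∀ (n : ℕ) (ρ : ↥H →* Equiv.Perm (Fin n)), ∃ e : Fin n → ℕ,
      Function.Injective e ∧ ∀ (h : ↥H) (i : Fin n), e (ρ h i) = (h : Mi).1 (e i)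



open MulAction

section Aux

variable {G : Type} [Group G]

/-- Conjugacy setoid on subgroups. -/
def conjSetoid (G : Type) [Group G] : Setoid (Subgroup G) :=
  ⟨fun K L => ∃ g : G, ∀ h, h ∈ K ↔ g * h * g⁻¹ ∈ L, by
    constructor
    · intro K; exact ⟨1, by simp⟩
    · rintro K L ⟨g, hg⟩
      refine ⟨g⁻¹, fun h => ?_⟩
      rw [hg (g⁻¹ * h * g⁻¹⁻¹)]
      have : g * (g⁻¹ * h * g⁻¹⁻¹) * g⁻¹ = h := by group
      rw [this]
    · rintro K L M ⟨g, hg⟩ ⟨g', hg'⟩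
      refine ⟨g' * g, fun h => ?_⟩
      rw [hg h, hg' (g * h * g⁻¹)]
      have : g' * (g * h * g⁻¹) * g'⁻¹ = g' * g * h * (g' * g)⁻¹ := by group
      rw [this]⟩

lemma conj_quot_equiv {K L : Subgroup G} (hKL : (conjSetoid G).r K L) :
    ∃ e : G ⧸ K ≃ G ⧸ L, ∀ (g : G) (c : G ⧸ K), e (g • c) = g • e c := by
  obtain ⟨g, hg⟩ := hKL
  have wd1 : ∀ a b : G, @Setoid.r G (QuotientGroup.leftRel K) a b →
      (QuotientGroup.mk (a * g⁻¹) : G ⧸ L) = QuotientGroup.mk (b * g⁻¹) := by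
    intro a b hab
    have hab' := QuotientGroup.leftRel_apply.mp hab
    refine QuotientGroup.eq.mpr ?_
    have := (hg _).mp hab'
    have heq : g * (a⁻¹ * b) * g⁻¹ = (a * g⁻¹)⁻¹ * (b * g⁻¹) := by group
    rwa [heq] at this
  have wd2 : ∀ a b : G, @Setoid.r G (QuotientGroup.leftRel L) a b →
      (QuotientGroup.mk (a * g) : G ⧸ K) = QuotientGroup.mk (b * g) := by
    intro a b hab
    have hab' := QuotientGroup.leftRel_apply.mp hab
    refine QuotientGroup.eq.mpr ?_
    rw [hg ((a * g)⁻¹ * (b * g))]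
    have heq : g * ((a * g)⁻¹ * (b * g)) * g⁻¹ = a⁻¹ * b := by group
    rwa [heq]
  refine ⟨⟨fun c => Quotient.liftOn' c (fun a => QuotientGroup.mk (a * g⁻¹)) wd1,
          fun c => Quotient.liftOn' c (fun a => QuotientGroup.mk (a * g)) wd2, ?_, ?_⟩, ?_⟩
  · intro c
    induction c using Quotient.inductionOn' with
    | h a =>
      show (QuotientGroup.mk (a * g⁻¹ * g) : G ⧸ K) = QuotientGroup.mk a
      rw [inv_mul_cancel_right]
  · intro c
    induction c using Quotient.inductionOn' with
    | h a =>
      show (QuotientGroup.mk (a * g * g⁻¹) : G ⧸ L) = QuotientGroup.mk a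
      rw [mul_inv_cancel_right]
  · intro x c
    induction c using Quotient.inductionOn' with
    | h a =>
      show (QuotientGroup.mk (x * a * g⁻¹) : G ⧸ L) = QuotientGroup.mk (x * (a * g⁻¹))
      rw [mul_assoc]

lemma stab_conj {X : Type} [MulAction G X] (g : G) (x : X) :
    (conjSetoid G).r (stabilizer G x) (stabilizer G (g • x)) := by
  refine ⟨g, fun h => ?_⟩
  simp only [mem_stabilizer_iff]
  constructor
  · intro hh
    rw [mul_smul, mul_smul, inv_smul_smul, hh]
  · intro hh
    rw [mul_smul, mul_smul, inv_smul_smul] at hh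
    exact smul_left_cancel g hh


/-- Orbit space. -/
abbrev Orb (G : Type) [Group G] (X : Type) [MulAction G X] : Type := Quotient (orbitRel G X)

/-- Stabilizer of a chosen representative of an orbit. -/
noncomputable def SK (G : Type) [Group G] (X : Type) [MulAction G X] (o : Orb G X) :
    Subgroup G := stabilizer G o.out

/-- Equivariant orbit decomposition. -/
lemma decomp (G : Type) [Group G] (X : Type) [MulAction G X] :
    ∃ e : (Σ o : Orb G X, G ⧸ SK G X o) ≃ X,
      ∀ (g : G) (o : Orb G X) (c : G ⧸ SK G X o),
        e ⟨o, g • c⟩ = g • e ⟨o, c⟩ := by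
  have wd : ∀ (o : Orb G X) (a b : G),
      @Setoid.r G (QuotientGroup.leftRel (SK G X o)) a b → a • o.out = b • o.out := by
    intro o a b hab
    have hab' := QuotientGroup.leftRel_apply.mp hab
    have h1 : (a⁻¹ * b) • o.out = o.out := hab'
    calc a • o.out = a • (a⁻¹ * b) • o.out := by rw [h1]
    _ = b • o.out := by rw [smul_smul, mul_inv_cancel_left]
  set F : (Σ o : Orb G X, G ⧸ SK G X o) → X :=
    fun s => Quotient.liftOn' s.2 (fun a => a • s.1.out) (wd s.1) with hF
  have hFmk : ∀ (o : Orb G X) (a : G), F ⟨o, QuotientGroup.mk a⟩ = a • o.out := fun _ _ => rfl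
  have hbij : Function.Bijective F := by
    constructor
    · rintro ⟨o, c⟩ ⟨o', c'⟩ h
      induction c using Quotient.inductionOn' with
      | h a =>
        induction c' using Quotient.inductionOn' with
        | h b =>
          rw [hFmk, hFmk] at h
          have ho : o = o' := by
            rw [← Quotient.out_eq o, ← Quotient.out_eq o']
            refine Quotient.sound (MulAction.mem_orbit_iff.mpr ⟨a⁻¹ * b, ?_⟩)
            rw [mul_smul, ← h, inv_smul_smul]
          subst ho
          have h2 : (a⁻¹ * b) • o.out = o.out := by
            rw [mul_smul, ← h, inv_smul_smul]
          have hc : (QuotientGroup.mk a : G ⧸ SK G X o) = QuotientGroup.mk b :=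
            QuotientGroup.eq.mpr h2
          show (⟨o, (QuotientGroup.mk a : G ⧸ SK G X o)⟩ : Σ o : Orb G X, G ⧸ SK G X o)
            = ⟨o, QuotientGroup.mk b⟩
          rw [hc]
    · intro x
      obtain ⟨g, hg⟩ := MulAction.mem_orbit_iff.mp
        ((orbitRel G X).iseqv.symm
            (Quotient.exact' (Quotient.out_eq (Quotient.mk (orbitRel G X) x))) :
          x ∈ orbit G (Quotient.out (Quotient.mk (orbitRel G X) x)))
      exact ⟨⟨Quotient.mk (orbitRel G X) x, QuotientGroup.mk g⟩, hg⟩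
  refine ⟨Equiv.ofBijective F hbij, ?_⟩
  intro g o c
  induction c using Quotient.inductionOn' with
  | h a =>
    show F ⟨o, g • QuotientGroup.mk a⟩ = g • F ⟨o, QuotientGroup.mk a⟩
    have h3 : g • (QuotientGroup.mk a : G ⧸ SK G X o) = QuotientGroup.mk (g * a) := rfl
    rw [h3, hFmk, hFmk, mul_smul]

variable [Finite G]

/-- Universality of a `G`-action. -/
def UnivAct (G : Type) [Group G] (X : Type) [MulAction G X] : Prop :=
  ∀ (n : ℕ) (ρ : G →* Equiv.Perm (Fin n)), ∃ e : Fin n → X,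
    Function.Injective e ∧ ∀ (g : G) (i : Fin n), e (ρ g i) = g • e i

lemma univ_embed {X : Type} [MulAction G X] (h : UnivAct G X)
    (Z : Type) [Finite Z] [MulAction G Z] :
    ∃ f : Z → X, Function.Injective f ∧ ∀ (g : G) (z : Z), f (g • z) = g • f z := by
  cases nonempty_fintype Z
  obtain ⟨e, he1, he2⟩ := h (Fintype.card Z)
    { toFun := fun g => ((Fintype.equivFin Z).symm.trans (MulAction.toPerm g)).trans
        (Fintype.equivFin Z)
      map_one' := by ext x; simp
      map_mul' := by intro a b; ext x; simp [mul_smul] }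
  set q := Fintype.equivFin Z
  refine ⟨e ∘ q, he1.comp q.injective, fun g z => ?_⟩
  have h3 := he2 g (q z)
  simp only [MonoidHom.coe_mk, OneHom.coe_mk, Equiv.trans_apply, Equiv.symm_apply_apply,
    MulAction.toPerm_apply] at h3
  exact h3

/-- The conjugacy class of the stabilizer of an orbit. -/
noncomputable def cls (G : Type) [Group G] {X : Type} [MulAction G X] (o : Orb G X) :
    Quotient (conjSetoid G) := Quotient.mk (conjSetoid G) (SK G X o)

lemma fiber_infinite {X : Type} [MulAction G X] (h : UnivAct G X) (K : Subgroup G) :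
    Infinite {o : Orb G X // cls G o = Quotient.mk (conjSetoid G) K} := by
  have key : ∀ m : ℕ, ∃ f : Fin m → {o : Orb G X // cls G o = Quotient.mk (conjSetoid G) K},
      Function.Injective f := by
    intro m
    letI : SMul G (Fin m) := ⟨fun _ x => x⟩
    letI : MulAction G (Fin m) := { one_smul := fun _ => rfl, mul_smul := fun _ _ _ => rfl }
    obtain ⟨f, hf, hfe⟩ := univ_embed h (Fin m × (G ⧸ K))
    set x : Fin m → X := fun a => f (a, QuotientGroup.mk 1) with hx
    have hgx : ∀ (g : G) (a : Fin m), g • x a = f (a, QuotientGroup.mk g) := by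
      intro g a
      rw [hx, ← hfe]
      have h4 : g • ((a, QuotientGroup.mk 1) : Fin m × (G ⧸ K)) = (a, QuotientGroup.mk g) := by
        have : g • (QuotientGroup.mk 1 : G ⧸ K) = QuotientGroup.mk g := by
          show (QuotientGroup.mk (g * 1) : G ⧸ K) = QuotientGroup.mk g
          rw [mul_one]
        exact Prod.ext rfl this
      rw [h4]
    have hstab : ∀ a : Fin m, stabilizer G (x a) = K := by
      intro a
      ext g
      rw [mem_stabilizer_iff]
      constructor
      · intro hg
        rw [hgx] at hg
        have h2 : (QuotientGroup.mk g : G ⧸ K) = QuotientGroup.mk 1 := congrArg Prod.snd (hf hg)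
        rw [QuotientGroup.eq] at h2
        simpa using h2
      · intro hg
        rw [hgx]
        congr 1
        refine Prod.ext rfl ?_
        show (QuotientGroup.mk g : G ⧸ K) = QuotientGroup.mk 1
        rw [QuotientGroup.eq]
        simpa using hg
    have hcls : ∀ a : Fin m,
        cls G (Quotient.mk (orbitRel G X) (x a)) = Quotient.mk (conjSetoid G) K := by
      intro a
      obtain ⟨g, hg⟩ := MulAction.mem_orbit_iff.mp
        (Quotient.exact (Quotient.out_eq (Quotient.mk (orbitRel G X) (x a))) :
          (Quotient.mk (orbitRel G X) (x a)).out ∈ orbit G (x a))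
      refine Quotient.sound' ?_
      show (conjSetoid G).r (stabilizer G (Quotient.mk (orbitRel G X) (x a)).out) K
      have hg' : g • x a = (Quotient.mk (orbitRel G X) (x a)).out := hg
      rw [← hg', ← hstab a]
      exact (conjSetoid G).iseqv.symm (stab_conj g (x a))
    refine ⟨fun a => ⟨Quotient.mk (orbitRel G X) (x a), hcls a⟩, ?_⟩
    intro a b hab
    have h1 : Quotient.mk (orbitRel G X) (x a) = Quotient.mk (orbitRel G X) (x b) :=
      congrArg Subtype.val hab
    obtain ⟨g, hg⟩ := MulAction.mem_orbit_iff.mp (Quotient.exact h1 : x a ∈ orbit G (x b))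
    have h5 : f (b, QuotientGroup.mk g) = f (a, QuotientGroup.mk 1) := by
      rw [← hgx]; exact hg
    exact (congrArg Prod.fst (hf h5)).symm
  by_contra hinf
  rw [not_infinite_iff_finite] at hinf
  haveI := Fintype.ofFinite {o : Orb G X // cls G o = Quotient.mk (conjSetoid G) K}
  obtain ⟨f, hf⟩ := key (Fintype.card {o : Orb G X // cls G o = Quotient.mk (conjSetoid G) K} + 1)
  have hle := Fintype.card_le_of_injective f hf
  rw [Fintype.card_fin] at hle
  omega


lemma exists_equivariant_equiv {X Y : Type} [MulAction G X] [MulAction G Y]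
    [Countable X] [Countable Y] (hX : UnivAct G X) (hY : UnivAct G Y) :
    ∃ e : X ≃ Y, ∀ (g : G) (x : X), e (g • x) = g • e x := by
  obtain ⟨eX, heX⟩ := decomp G X
  obtain ⟨eY, heY⟩ := decomp G Y
  -- fibers of the class maps are countably infinite
  haveI hiX : ∀ v : Quotient (conjSetoid G), Infinite {o : Orb G X // cls G o = v} := by
    intro v
    have := fiber_infinite hX v.out
    rwa [Quotient.out_eq] at this
  haveI hiY : ∀ v : Quotient (conjSetoid G), Infinite {o : Orb G Y // cls G o = v} := by
    intro v
    have := fiber_infinite hY v.out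
    rwa [Quotient.out_eq] at this
  have fe : ∀ v : Quotient (conjSetoid G),
      {o : Orb G X // cls G o = v} ≃ {o : Orb G Y // cls G o = v} := by
    intro v
    haveI := hiX v; haveI := hiY v
    haveI := Classical.choice (nonempty_denumerable {o : Orb G X // cls G o = v})
    haveI := Classical.choice (nonempty_denumerable {o : Orb G Y // cls G o = v})
    exact (Denumerable.eqv _).trans (Denumerable.eqv _).symm
  set t : Orb G X ≃ Orb G Y :=
    (Equiv.sigmaFiberEquiv (cls G)).symm.trans
      ((Equiv.sigmaCongrRight fe).trans (Equiv.sigmaFiberEquiv (cls G))) with ht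
  have htc : ∀ o : Orb G X, cls G (t o) = cls G o := fun o => (fe (cls G o) ⟨o, rfl⟩).2
  have hconj : ∀ o : Orb G X, (conjSetoid G).r (SK G X o) (SK G Y (t o)) := by
    intro o
    exact (conjSetoid G).iseqv.symm (Quotient.exact' (htc o))
  choose qe hqe using fun o => conj_quot_equiv (hconj o)
  set mid : (Σ o : Orb G X, G ⧸ SK G X o) ≃ (Σ o : Orb G Y, G ⧸ SK G Y o) :=
    Equiv.sigmaCongr t qe with hmid
  have hmids : ∀ (o : Orb G X) (c : G ⧸ SK G X o), mid ⟨o, c⟩ = ⟨t o, qe o c⟩ := fun _ _ => rfl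
  refine ⟨eX.symm.trans (mid.trans eY), ?_⟩
  intro g x
  obtain ⟨⟨o, c⟩, hs⟩ : ∃ s : Σ o : Orb G X, G ⧸ SK G X o, eX.symm x = s := ⟨_, rfl⟩
  have h1 : eX.symm (g • x) = ⟨o, g • c⟩ := by
    apply eX.injective
    rw [Equiv.apply_symm_apply, heX, ← hs, Equiv.apply_symm_apply]
  simp only [Equiv.trans_apply]
  rw [h1, hs, hmids, hmids, hqe, heY]
end Aux

/-- The canonical complete `G`-set universe. -/
def Can (G : Type) [Group G] : Type := Σ K : Subgroup G, ℕ × (G ⧸ K)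

instance (G : Type) [Group G] : MulAction G (Can G) where
  smul g s := ⟨s.1, s.2.1, g • s.2.2⟩
  one_smul s := by
    rcases s with ⟨K, m, c⟩
    show (⟨K, m, (1 : G) • c⟩ : Can G) = ⟨K, m, c⟩
    rw [one_smul]
  mul_smul a b s := by
    rcases s with ⟨K, m, c⟩
    show (⟨K, m, (a * b) • c⟩ : Can G) = ⟨K, m, a • b • c⟩
    rw [mul_smul]

lemma Can.smul_def (G : Type) [Group G] (g : G) (s : Can G) :
    g • s = ⟨s.1, s.2.1, g • s.2.2⟩ := rfl

instance (G : Type) [Group G] [Finite G] : Countable (Can G) := by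
  haveI : Finite (Subgroup G) :=
    Finite.of_injective (fun K => (K : Set G)) SetLike.coe_injective
  haveI : ∀ K : Subgroup G, Countable (ℕ × (G ⧸ K)) := fun K => by
    haveI : Finite (G ⧸ K) := Quotient.finite _
    infer_instance
  exact inferInstanceAs (Countable (Σ K : Subgroup G, ℕ × (G ⧸ K)))

instance (G : Type) [Group G] : Infinite (Can G) :=
  Infinite.of_injective (fun n => (⟨⊥, n, 1⟩ : Can G))
    (fun a b h => congrArg (fun s : Can G => s.2.1) h)

lemma Can.faithful {G : Type} [Group G] {g g' : G}
    (h : ∀ s : Can G, g • s = g' • s) : g = g' := by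
  have h1 := h ⟨⊥, 0, 1⟩
  change (⟨⊥, 0, g • (1 : G ⧸ (⊥ : Subgroup G))⟩ : Can G) = ⟨⊥, 0, g' • (1 : G ⧸ (⊥ : Subgroup G))⟩ at h1
  injection h1 with h1a h1b
  have h1c := congrArg Prod.snd h1b
  have h2 : (QuotientGroup.mk (g * 1) : G ⧸ (⊥ : Subgroup G)) = QuotientGroup.mk (g' * 1) := h1c
  rw [QuotientGroup.eq] at h2
  rw [Subgroup.mem_bot] at h2
  have h3 : (g * 1)⁻¹ * (g' * 1) = 1 := h2
  rw [mul_one, mul_one] at h3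
  exact inv_mul_eq_one.mp h3

lemma Can.univ (G : Type) [Group G] [Finite G] : UnivAct G (Can G) := by
  intro n ρ
  letI : MulAction G (Fin n) := MulAction.compHom (Fin n) ρ
  have hsmul : ∀ (g : G) (i : Fin n), g • i = ρ g i := fun _ _ => rfl
  obtain ⟨eD, heD⟩ := decomp G (Fin n)
  obtain ⟨ι, hι⟩ := exists_injective_nat (Orb G (Fin n))
  set F : (Σ o : Orb G (Fin n), G ⧸ SK G (Fin n) o) → Can G :=
    fun s => ⟨SK G (Fin n) s.1, ι s.1, s.2⟩ with hFdef
  have hFinj : Function.Injective F := by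
    rintro ⟨o, c⟩ ⟨o', c'⟩ h
    have h1 : ι o = ι o' := congrArg (fun s : Can G => s.2.1) h
    have ho : o = o' := hι h1
    subst ho
    have h' : (⟨SK G (Fin n) o, ι o, c⟩ : Can G) = ⟨SK G (Fin n) o, ι o, c'⟩ := h
    injection h' with ha hb
    have hc := congrArg Prod.snd hb
    exact congrArg (fun z => (⟨o, z⟩ : Σ o : Orb G (Fin n), G ⧸ SK G (Fin n) o)) hc
  refine ⟨fun i => F (eD.symm i), hFinj.comp eD.symm.injective, ?_⟩
  intro g i
  obtain ⟨⟨o, c⟩, hs⟩ : ∃ s : Σ o : Orb G (Fin n), G ⧸ SK G (Fin n) o, eD.symm i = s := ⟨_, rfl⟩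
  have h1 : eD.symm (ρ g i) = ⟨o, g • c⟩ := by
    apply eD.injective
    rw [Equiv.apply_symm_apply, heD, ← hs, Equiv.apply_symm_apply, hsmul]
  show F (eD.symm (ρ g i)) = g • F (eD.symm i)
  rw [h1, hs]
  rfl

/-- `ℕ` with a `G`-action coming from a permutation representation. -/
def PAct (G : Type) [Group G] (α : G →* Equiv.Perm ℕ) : Type := ℕ

instance (G : Type) [Group G] (α : G →* Equiv.Perm ℕ) : MulAction G (PAct G α) where
  smul g n := α g n
  one_smul n := by show α 1 n = n; rw [map_one]; rfl
  mul_smul a b n := by show α (a * b) n = α a (α b n); rw [map_mul]; rfl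

instance (G : Type) [Group G] (α : G →* Equiv.Perm ℕ) : Countable (PAct G α) :=
  inferInstanceAs (Countable ℕ)

/-- The permutation representation attached to a homomorphism into `Mi` landing in a group. -/
noncomputable def permOf (H : Type) [Group H] (k : H →* Mi) : H →* Equiv.Perm ℕ where
  toFun g :=
    { toFun := (k g).1
      invFun := (k g⁻¹).1
      left_inv := fun n => by
        have h1 : k g⁻¹ * k g = 1 := by rw [← map_mul, inv_mul_cancel, map_one]
        exact congrFun (congrArg Subtype.val h1) n
      right_inv := fun n => by
        have h1 : k g * k g⁻¹ = 1 := by rw [← map_mul, mul_inv_cancel, map_one]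
        exact congrFun (congrArg Subtype.val h1) n }
  map_one' := Equiv.ext fun n => by
    show (k 1).1 n = n
    rw [map_one]
    rfl
  map_mul' a b := Equiv.ext fun n => by
    show (k (a * b)).1 n = (k a).1 ((k b).1 n)
    rw [map_mul]
    rfl

lemma permOf_apply (H : Type) [Group H] (k : H →* Mi) (g : H) (n : ℕ) :
    permOf H k g n = (k g).1 n := rfl

/-- The range of an injective monoid hom from a group, as a `MulEquiv`. -/
noncomputable def rangeEquiv {H : Type} [Group H] (i : H →* Mi)
    (hi : Function.Injective i) : H ≃* ↥(MonoidHom.mrange i) :=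
  MulEquiv.ofBijective i.mrangeRestrict
    ⟨fun a b h => hi (congrArg Subtype.val h), by
      rintro ⟨m, hm⟩
      obtain ⟨g, hg⟩ := MonoidHom.mem_mrange.mp hm
      exact ⟨g, Subtype.ext hg⟩⟩

lemma rangeEquiv_coe {H : Type} [Group H] (i : H →* Mi) (hi : Function.Injective i) (g : H) :
    ((rangeEquiv i hi g : ↥(MonoidHom.mrange i)) : Mi) = i g := rfl

/-- Universality of `IsUniversal` transferred to `PAct`. -/
lemma pact_univ {H : Type} [Group H] [Finite H] (i : H →* Mi) (hi : Function.Injective i)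
    (hU : IsUniversal (MonoidHom.mrange i)) : UnivAct H (PAct H (permOf H i)) := by
  intro n ρ'
  set eG := rangeEquiv i hi
  obtain ⟨e, he1, he2⟩ := hU.2.2 n (ρ'.comp eG.symm.toMonoidHom)
  refine ⟨e, he1, ?_⟩
  intro g x
  have h3 := he2 (eG g) x
  have h4 : (ρ'.comp eG.symm.toMonoidHom) (eG g) = ρ' g := by
    show ρ' (eG.symm (eG g)) = ρ' g
    rw [MulEquiv.symm_apply_apply]
  rw [h4] at h3
  exact h3


/- ## STATEMENT 8:
Every finite group `H` admits an injective homomorphism `i : H → 𝕄` with universal image;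
and any two such homomorphisms are conjugate by an invertible element of `𝕄`. -/
theorem universal_embeddings_exist_and_are_conjugate :
    (∀ (H : Type) [Group H] [Finite H],
      ∃ i : H →* Mi, Function.Injective i ∧ IsUniversal (MonoidHom.mrange i)) ∧
    (∀ (H : Type) [Group H] [Finite H] (i j : H →* Mi),
      Function.Injective i → IsUniversal (MonoidHom.mrange i) →
      Function.Injective j → IsUniversal (MonoidHom.mrange j) →
      ∃ u : Miˣ, ∀ h : H, j h = (u : Mi) * i h * ((u⁻¹ : Miˣ) : Mi)) := by
  constructor
  · -- Existence
    intro H _ _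
    obtain ⟨ψ⟩ : Nonempty (Can H ≃ ℕ) := by
      haveI := Classical.choice (nonempty_denumerable (Can H))
      exact ⟨Denumerable.eqv _⟩
    set i : H →* Mi :=
      { toFun := fun g => ⟨fun n => ψ (g • ψ.symm n), fun a b hab => by
          have h1 := ψ.injective hab
          have h2 := smul_left_cancel g h1
          exact ψ.symm.injective h2⟩
        map_one' := Subtype.ext (funext fun n => by simp)
        map_mul' := fun a b => Subtype.ext (funext fun n => by
          show ψ ((a * b) • ψ.symm n) = ψ (a • ψ.symm (ψ (b • ψ.symm n)))
          rw [Equiv.symm_apply_apply, mul_smul]) } with hidef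
    have hiapp : ∀ (g : H) (n : ℕ), (i g).1 n = ψ (g • ψ.symm n) := fun _ _ => rfl
    have hi : Function.Injective i := by
      intro a b hab
      refine Can.faithful (g := a) (g' := b) fun s => ?_
      have h1 : ψ (a • ψ.symm (ψ s)) = ψ (b • ψ.symm (ψ s)) :=
        congrFun (congrArg Subtype.val hab) (ψ s)
      rw [Equiv.symm_apply_apply] at h1
      exact ψ.injective h1
    refine ⟨i, hi, ?_, ?_, ?_⟩
    · intro h hm
      obtain ⟨g, rfl⟩ := MonoidHom.mem_mrange.mp hm
      refine ⟨i g⁻¹, MonoidHom.mem_mrange.mpr ⟨g⁻¹, rfl⟩, ?_, ?_⟩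
      · rw [← map_mul, mul_inv_cancel, map_one]
      · rw [← map_mul, inv_mul_cancel, map_one]
    · exact Finite.of_surjective i.mrangeRestrict (rangeEquiv i hi).surjective
    · intro n ρ
      set eG := rangeEquiv i hi
      letI : MulAction H (Fin n) := MulAction.compHom (Fin n) (ρ.comp eG.toMonoidHom)
      obtain ⟨f, hfinj, hfe⟩ := univ_embed (Can.univ H) (Fin n)
      refine ⟨fun x => ψ (f x), fun a b hab => hfinj (ψ.injective hab), ?_⟩
      intro h x
      obtain ⟨g, rfl⟩ : ∃ g, eG g = h := ⟨eG.symm h, eG.apply_symm_apply h⟩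
      have h1 : ρ (eG g) x = g • x := rfl
      rw [h1]
      show ψ (f (g • x)) = ((eG g : ↥(MonoidHom.mrange i)) : Mi).1 (ψ (f x))
      rw [hfe, rangeEquiv_coe, hiapp, Equiv.symm_apply_apply]
  · -- Uniqueness up to conjugacy
    intro H _ _ i j hi hUi hj hUj
    have hα := pact_univ i hi hUi
    have hβ := pact_univ j hj hUj
    obtain ⟨e, he⟩ := exists_equivariant_equiv hα hβ
    set σ : Equiv.Perm ℕ := e with hσ
    have key : ∀ (h : H) (x : ℕ), σ ((i h).1 x) = (j h).1 (σ x) := fun h x => he h x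
    refine ⟨⟨⟨σ, σ.injective⟩, ⟨σ.symm, σ.symm.injective⟩,
      Subtype.ext (funext fun n => σ.apply_symm_apply n),
      Subtype.ext (funext fun n => σ.symm_apply_apply n)⟩, ?_⟩
    intro h
    refine Subtype.ext (funext fun n => ?_)
    show (j h).1 n = σ ((i h).1 (σ.symm n))
    rw [key h (σ.symm n), Equiv.apply_symm_apply]
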